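/- In the 2-body Calogero–Moser system with $F_1 = p_1+p_2$, $F_2 = p_1^2+p_2^2+2\nu^2/(q_1-q_2)^2$, and $K_{2,1} = (q_1 p_1 + q_2 p_2) F_1 - (q_1+q_2) F_2$, the canonical Poisson bracket satisfies $\{F_1, K_{2,1}\} = 2F_2 - F_1^2$. -/

import Mathlib

/-- Canonical Poisson bracket of two functions of `(q₁, q₂, p₁, p₂)`. -/
noncomputable def pbr (f g : ℝ → ℝ → ℝ → ℝ → ℝ) (q₁ q₂ p₁ p₂ : ℝ) : ℝ :=
    deriv (fun x => f x q₂ p₁ p₂) q₁ * deriv (fun x => g q₁ q₂ x p₂) p₁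
  - deriv (fun x => f q₁ q₂ x p₂) p₁ * deriv (fun x => g x q₂ p₁ p₂) q₁
  + deriv (fun x => f q₁ x p₁ p₂) q₂ * deriv (fun x => g q₁ q₂ p₁ x) p₂
  - deriv (fun x => f q₁ q₂ p₁ x) p₂ * deriv (fun x => g q₁ x p₁ p₂) q₂

lemma auxA (ν a b c d : ℝ) (h : a - b ≠ 0) :
    HasDerivAt (fun x => (x * c + b * d) * (c + d)
        - (x + b) * (c ^ 2 + d ^ 2 + 2 * ν ^ 2 / (x - b) ^ 2))
      (c * (c + d) - ((c ^ 2 + d ^ 2 + 2 * ν ^ 2 / (a - b) ^ 2)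
        + (a + b) * (-(4 * ν ^ 2 * (a - b)) / ((a - b) ^ 2) ^ 2))) a := by
  have hd1 : HasDerivAt (fun x : ℝ => (x * c + b * d) * (c + d)) (c * (c + d)) a := by
    simpa using (((hasDerivAt_id a).mul_const c).add_const (b * d)).mul_const (c + d)
  have hden : HasDerivAt (fun x : ℝ => (x - b) ^ 2) (2 * (a - b)) a := by
    have := ((hasDerivAt_id a).sub_const b).fun_pow 2
    simpa [mul_comm] using this
  have hne : (a - b) ^ 2 ≠ 0 := pow_ne_zero _ h
  have hfrac : HasDerivAt (fun x : ℝ => 2 * ν ^ 2 / (x - b) ^ 2)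
      (-(4 * ν ^ 2 * (a - b)) / ((a - b) ^ 2) ^ 2) a := by
    have := (hasDerivAt_const a (2 * ν ^ 2)).fun_div hden hne
    exact this.congr_deriv (by ring)
  have h2 := ((hasDerivAt_id a).add_const b).fun_mul
    ((hasDerivAt_const a (c ^ 2 + d ^ 2)).fun_add hfrac)
  have := hd1.sub h2
  refine this.congr_deriv ?_
  simp only [id_eq]
  field_simp
  ring

lemma auxB (ν a b c d : ℝ) (h : b - a ≠ 0) :
    HasDerivAt (fun x => (b * d + x * c) * (d + c)
        - (b + x) * (d ^ 2 + c ^ 2 + 2 * ν ^ 2 / (b - x) ^ 2))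
      (c * (d + c) - ((d ^ 2 + c ^ 2 + 2 * ν ^ 2 / (b - a) ^ 2)
        + (b + a) * (4 * ν ^ 2 * (b - a) / ((b - a) ^ 2) ^ 2))) a := by
  have hd1 : HasDerivAt (fun x : ℝ => (b * d + x * c) * (d + c)) (c * (d + c)) a := by
    simpa using (((hasDerivAt_id a).mul_const c).const_add (b * d)).mul_const (d + c)
  have hden : HasDerivAt (fun x : ℝ => (b - x) ^ 2) (-2 * (b - a)) a := by
    have := ((hasDerivAt_id a).const_sub b).fun_pow 2
    exact this.congr_deriv (by simp)
  have hne : (b - a) ^ 2 ≠ 0 := pow_ne_zero _ h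
  have hfrac : HasDerivAt (fun x : ℝ => 2 * ν ^ 2 / (b - x) ^ 2)
      (4 * ν ^ 2 * (b - a) / ((b - a) ^ 2) ^ 2) a := by
    have := (hasDerivAt_const a (2 * ν ^ 2)).fun_div hden hne
    exact this.congr_deriv (by ring)
  have h2 := ((hasDerivAt_id a).const_add b).fun_mul
    ((hasDerivAt_const a (d ^ 2 + c ^ 2)).fun_add hfrac)
  have := hd1.sub h2
  refine this.congr_deriv ?_
  simp only [id_eq]
  field_simp
  ring

/-- `{F₁, K₂₁} = 2 F₂ - F₁²` for the 2-body Calogero–Moser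
system. -/
theorem stmt5 (ν : ℝ) :
    ∀ q₁ q₂ p₁ p₂ : ℝ, q₁ ≠ q₂ →
      pbr (fun _ _ p₁ p₂ => p₁ + p₂)
          (fun q₁ q₂ p₁ p₂ =>
            (q₁ * p₁ + q₂ * p₂) * (p₁ + p₂)
            - (q₁ + q₂) * (p₁ ^ 2 + p₂ ^ 2 + 2 * ν ^ 2 / (q₁ - q₂) ^ 2))
          q₁ q₂ p₁ p₂
      = 2 * (p₁ ^ 2 + p₂ ^ 2 + 2 * ν ^ 2 / (q₁ - q₂) ^ 2)
        - (p₁ + p₂) ^ 2 := by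
  intro q₁ q₂ p₁ p₂ hq
  have hne : q₁ - q₂ ≠ 0 := sub_ne_zero.mpr hq
  unfold pbr
  have e1 : deriv (fun x => (fun _ _ p₁ p₂ : ℝ => p₁ + p₂) x q₂ p₁ p₂) q₁ = 0 := by simp
  have e2 : deriv (fun x => (fun _ _ p₁ p₂ : ℝ => p₁ + p₂) q₁ x p₁ p₂) q₂ = 0 := by simp
  have e3 : deriv (fun x => (fun _ _ p₁ p₂ : ℝ => p₁ + p₂) q₁ q₂ x p₂) p₁ = 1 := by
    simpa using ((hasDerivAt_id p₁).add_const p₂).deriv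
  have e4 : deriv (fun x => (fun _ _ p₁ p₂ : ℝ => p₁ + p₂) q₁ q₂ p₁ x) p₂ = 1 := by
    simpa using ((hasDerivAt_id p₂).const_add p₁).deriv
  rw [e1, e2, e3, e4]
  rw [(auxA ν q₁ q₂ p₁ p₂ hne).deriv, (auxB ν q₂ q₁ p₂ p₁ hne).deriv]
  field_simp
  ring
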